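/- The full (primary) baker's map on C × C is a product of finitely many transpositions of disjoint cylinder sets. -/

import Mathlib

/-- The Cantor set, modeled as infinite binary sequences. -/
abbrev C := ℕ → Bool

def shift (x : C) : C := fun n => x (n + 1)

def prepend (b : Bool) (y : C) : C
  | 0 => b
  | n + 1 => y n

/-- Concatenate a finite binary word with an infinite binary sequence. -/
def cat (u : List Bool) (w : C) : C := fun n =>
  if h : n < u.length then u.get ⟨n, h⟩ else w (n - u.length)

/-- The cylinder of all infinite sequences with prefix `u`. -/
def cyl (u : List Bool) : Set C := Set.range (cat u)

/-- `φ` is the baker's map supported on the cylinder set `[u] × [v]`: on that cylinder it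
moves the first digit after `u` of the first coordinate to just after `v` in the second
coordinate, and it is the identity elsewhere. -/
def IsBaker (u v : List Bool) (φ : Equiv.Perm (C × C)) : Prop :=
  (∀ w w' : C, φ (cat u w, cat v w') = (cat u (shift w), cat v (prepend (w 0) w'))) ∧
  ∀ p : C × C, p ∉ cyl u ×ˢ cyl v → φ p = p

/-- `φ` is a transposition of two disjoint cylinder sets in `C × C`: it swaps them by
prefix replacement and fixes everything else. -/
def IsCylTransposition (φ : Equiv.Perm (C × C)) : Prop :=
  ∃ u v u' v' : List Bool,
    (cyl u ×ˢ cyl v) ∩ (cyl u' ×ˢ cyl v') = ∅ ∧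
    (∀ w w' : C, φ (cat u w, cat v w') = (cat u' w, cat v' w')) ∧
    (∀ w w' : C, φ (cat u' w, cat v' w') = (cat u w, cat v w')) ∧
    ∀ p : C × C, p ∉ (cyl u ×ˢ cyl v) ∪ (cyl u' ×ˢ cyl v') → φ p = p

-- basics
def drop (n : ℕ) (x : C) : C := fun i => x (i + n)

def hasPref (u : List Bool) (x : C) : Prop := ∀ i < u.length, x i = u.getD i false

instance (u : List Bool) (x : C) : Decidable (hasPref u x) := Nat.decidableBallLT _ _

lemma prepend_zero (b : Bool) (y : C) : prepend b y 0 = b := rfl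
lemma prepend_succ (b : Bool) (y : C) (n : ℕ) : prepend b y (n+1) = y n := rfl
lemma shift_prepend (b : Bool) (y : C) : shift (prepend b y) = y := rfl
lemma prepend_shift (x : C) : prepend (x 0) (shift x) = x := by
  funext n; cases n <;> rfl

lemma cat_apply_lt (u : List Bool) (w : C) {n : ℕ} (h : n < u.length) :
    cat u w n = u.getD n false := by
  simp [cat, h, List.getD_eq_getElem, List.get_eq_getElem]

lemma cat_apply_ge (u : List Bool) (w : C) {n : ℕ} (h : u.length ≤ n) :
    cat u w n = w (n - u.length) := by
  simp [cat, Nat.not_lt.mpr h]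

lemma hasPref_cat (u : List Bool) (w : C) : hasPref u (cat u w) :=
  fun i hi => cat_apply_lt u w hi

lemma drop_cat (u : List Bool) (w : C) : drop u.length (cat u w) = w := by
  funext n
  have : u.length ≤ n + u.length := Nat.le_add_left _ _
  simp [drop, cat_apply_ge u w this]

lemma cat_drop {u : List Bool} {x : C} (h : hasPref u x) :
    cat u (drop u.length x) = x := by
  funext n
  by_cases hn : n < u.length
  · rw [cat_apply_lt u _ hn, h n hn]
  · rw [cat_apply_ge u _ (Nat.not_lt.mp hn), drop]
    congr 1; omega

lemma cat_nil (w : C) : cat [] w = w := by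
  funext n; simp [cat]

lemma drop_zero (x : C) : drop 0 x = x := rfl

lemma cat_append_single (u : List Bool) (b : Bool) (w : C) :
    cat (u ++ [b]) w = cat u (prepend b w) := by
  funext n
  rcases lt_trichotomy n u.length with h | h | h
  · rw [cat_apply_lt _ _ (by simp; omega), cat_apply_lt _ _ h]
    simp only [List.getD, List.getD_eq_getElem?_getD]
    rw [List.getElem?_append, if_pos h]
  · subst h
    rw [cat_apply_lt _ _ (by simp), cat_apply_ge _ _ le_rfl]
    simp [List.getD_append_right, prepend_zero]
  · rw [cat_apply_ge _ _ (by simp; omega), cat_apply_ge _ _ (by omega)]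
    simp only [List.length_append, List.length_cons, List.length_nil]
    obtain ⟨k, hk⟩ : ∃ k, n - u.length = k + 1 := ⟨n - u.length - 1, by omega⟩
    rw [show n - (u.length + 1) = k from by omega, hk, prepend_succ]

lemma hasPref_append_single {u : List Bool} {b : Bool} {x : C} :
    hasPref (u ++ [b]) x ↔ hasPref u x ∧ x u.length = b := by
  constructor
  · intro h
    refine ⟨fun i hi => ?_, ?_⟩
    · rw [h i (by simp; omega)]
      simp only [List.getD, List.getD_eq_getElem?_getD]
      rw [List.getElem?_append, if_pos hi]
    · rw [h u.length (by simp)]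
      simp [List.getD_append_right]
  · rintro ⟨h1, h2⟩ i hi
    simp only [List.length_append, List.length_cons, List.length_nil] at hi
    rcases lt_or_eq_of_le (Nat.lt_succ_iff.mp hi) with h | h
    · rw [h1 i h]; simp only [List.getD, List.getD_eq_getElem?_getD]; rw [List.getElem?_append, if_pos h]
    · subst h; rw [h2]; simp [List.getD_append_right]

lemma mem_cyl_iff {u : List Bool} {x : C} : x ∈ cyl u ↔ hasPref u x := by
  constructor
  · rintro ⟨w, rfl⟩; exact hasPref_cat u w
  · intro h; exact ⟨drop u.length x, cat_drop h⟩

-- blocks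
def inBlk (u v : List Bool) (z : C × C) : Prop := hasPref u z.1 ∧ hasPref v z.2

instance (u v : List Bool) (z : C × C) : Decidable (inBlk u v z) := instDecidableAnd

def Disj (u v u' v' : List Bool) : Prop :=
  ∀ z : C × C, inBlk u v z → inBlk u' v' z → False

lemma Disj.symm {u v u' v' : List Bool} (h : Disj u v u' v') : Disj u' v' u v :=
  fun z h1 h2 => h z h2 h1

lemma inBlk_cat (u v : List Bool) (w w' : C) : inBlk u v (cat u w, cat v w') :=
  ⟨hasPref_cat u w, hasPref_cat v w'⟩

lemma inBlk_fst_ext {u v : List Bool} {b : Bool} {z : C × C}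
    (h : inBlk (u ++ [b]) v z) : inBlk u v z :=
  ⟨(hasPref_append_single.mp h.1).1, h.2⟩

lemma inBlk_snd_ext {u v : List Bool} {b : Bool} {z : C × C}
    (h : inBlk u (v ++ [b]) z) : inBlk u v z :=
  ⟨h.1, (hasPref_append_single.mp h.2).1⟩

-- transpositions
def trFun (u v u' v' : List Bool) (z : C × C) : C × C :=
  if inBlk u v z then (cat u' (drop u.length z.1), cat v' (drop v.length z.2))
  else if inBlk u' v' z then (cat u (drop u'.length z.1), cat v (drop v'.length z.2))
  else z

lemma trFun_left (u v u' v' : List Bool) (w w' : C) :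
    trFun u v u' v' (cat u w, cat v w') = (cat u' w, cat v' w') := by
  rw [trFun, if_pos (inBlk_cat u v w w')]
  simp [drop_cat]

lemma trFun_right {u v u' v' : List Bool} (hD : Disj u v u' v') (w w' : C) :
    trFun u v u' v' (cat u' w, cat v' w') = (cat u w, cat v w') := by
  rw [trFun, if_neg (fun h => hD _ h (inBlk_cat u' v' w w')),
    if_pos (inBlk_cat u' v' w w')]
  simp [drop_cat]

lemma trFun_fix {u v u' v' : List Bool} {z : C × C}
    (h : ¬ inBlk u v z) (h' : ¬ inBlk u' v' z) : trFun u v u' v' z = z := by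
  rw [trFun, if_neg h, if_neg h']

lemma trFun_invol {u v u' v' : List Bool} (hD : Disj u v u' v') :
    Function.Involutive (trFun u v u' v') := by
  intro z
  by_cases h : inBlk u v z
  · have e : trFun u v u' v' z =
        (cat u' (drop u.length z.1), cat v' (drop v.length z.2)) := by
      rw [trFun, if_pos h]
    rw [e, trFun_right hD, cat_drop h.1, cat_drop h.2]
  · by_cases h' : inBlk u' v' z
    · have e : trFun u v u' v' z =
          (cat u (drop u'.length z.1), cat v (drop v'.length z.2)) := by
        rw [trFun, if_neg h, if_pos h']
      rw [e, trFun_left, cat_drop h'.1, cat_drop h'.2]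
    · rw [trFun_fix h h', trFun_fix h h']

def tr (u v u' v' : List Bool) (hD : Disj u v u' v') : Equiv.Perm (C × C) :=
  Function.Involutive.toPerm _ (trFun_invol hD)

lemma tr_apply (u v u' v' : List Bool) (hD : Disj u v u' v') (z : C × C) :
    tr u v u' v' hD z = trFun u v u' v' z := rfl

lemma tr_inv (u v u' v' : List Bool) (hD : Disj u v u' v') :
    (tr u v u' v' hD)⁻¹ = tr u v u' v' hD := by
  have h1 : tr u v u' v' hD * tr u v u' v' hD = 1 :=
    Equiv.ext fun z => trFun_invol hD z
  exact inv_eq_of_mul_eq_one_left h1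

lemma tr_isCylTransposition (u v u' v' : List Bool) (hD : Disj u v u' v') :
    IsCylTransposition (tr u v u' v' hD) := by
  refine ⟨u, v, u', v', ?_, ?_, ?_, ?_⟩
  · rw [Set.eq_empty_iff_forall_notMem]
    rintro z ⟨⟨hz1, hz2⟩, hz3, hz4⟩
    exact hD z ⟨mem_cyl_iff.mp hz1, mem_cyl_iff.mp hz2⟩ ⟨mem_cyl_iff.mp hz3, mem_cyl_iff.mp hz4⟩
  · exact fun w w' => trFun_left u v u' v' w w'
  · exact fun w w' => trFun_right hD w w'
  · intro p hp
    simp only [Set.mem_union, Set.mem_prod, not_or, not_and] at hp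
    refine trFun_fix (fun h => ?_) (fun h => ?_)
    · exact (hp.1 (mem_cyl_iff.mpr h.1)) (mem_cyl_iff.mpr h.2)
    · exact (hp.2 (mem_cyl_iff.mpr h.1)) (mem_cyl_iff.mpr h.2)

-- bakers
def bkFun (u v : List Bool) (z : C × C) : C × C :=
  if inBlk u v z then
    (cat u (shift (drop u.length z.1)),
     cat v (prepend (drop u.length z.1 0) (drop v.length z.2)))
  else z

def bkInv (u v : List Bool) (z : C × C) : C × C :=
  if inBlk u v z then
    (cat u (prepend (drop v.length z.2 0) (drop u.length z.1)),
     cat v (shift (drop v.length z.2)))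
  else z

def bk (u v : List Bool) : Equiv.Perm (C × C) where
  toFun := bkFun u v
  invFun := bkInv u v
  left_inv := by
    intro z
    by_cases h : inBlk u v z
    · rw [bkFun, if_pos h, bkInv, if_pos (inBlk_cat _ _ _ _)]
      simp only [drop_cat, prepend_zero, shift_prepend, prepend_shift]
      rw [cat_drop h.1, cat_drop h.2]
    · rw [bkFun, if_neg h, bkInv, if_neg h]
  right_inv := by
    intro z
    by_cases h : inBlk u v z
    · rw [bkInv, if_pos h, bkFun, if_pos (inBlk_cat _ _ _ _)]
      simp only [drop_cat, prepend_zero, shift_prepend, prepend_shift]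
      rw [cat_drop h.1, cat_drop h.2]
    · rw [bkInv, if_neg h, bkFun, if_neg h]

lemma bk_cat (u v : List Bool) (w w' : C) :
    bk u v (cat u w, cat v w') = (cat u (shift w), cat v (prepend (w 0) w')) := by
  show bkFun u v _ = _
  rw [bkFun, if_pos (inBlk_cat _ _ _ _)]
  simp [drop_cat]

lemma bk_fix (u v : List Bool) {z : C × C} (h : ¬ inBlk u v z) : bk u v z = z := by
  show bkFun u v _ = _
  rw [bkFun, if_neg h]

lemma bk_inv_cat (u v : List Bool) (w w' : C) :
    (bk u v)⁻¹ (cat u w, cat v w') = (cat u (prepend (w' 0) w), cat v (shift w')) := by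
  show bkInv u v _ = _
  rw [bkInv, if_pos (inBlk_cat _ _ _ _)]
  simp [drop_cat]

lemma bk_inv_fix (u v : List Bool) {z : C × C} (h : ¬ inBlk u v z) : (bk u v)⁻¹ z = z := by
  show bkInv u v _ = _
  rw [bkInv, if_neg h]

-- more prefix helpers
lemma cat_apply_len (u : List Bool) (s : C) : cat u s u.length = s 0 := by
  rw [cat_apply_ge u s le_rfl, Nat.sub_self]

lemma cat_split (u : List Bool) (s : C) : cat u s = cat (u ++ [s 0]) (shift s) := by
  rw [cat_append_single, prepend_shift]

lemma not_inBlk_fst_bit {u v : List Bool} {s : C} {b : Bool} (hb : s 0 ≠ b) (y : C) :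
    ¬ inBlk (u ++ [b]) v (cat u s, y) := by
  intro hh
  exact hb (by simpa [cat_apply_len] using (hasPref_append_single.mp hh.1).2)

lemma not_inBlk_snd_bit {u v : List Bool} {s' : C} {b : Bool} (hb : s' 0 ≠ b) (x : C) :
    ¬ inBlk u (v ++ [b]) (x, cat v s') := by
  intro hh
  exact hb (by simpa [cat_apply_len] using (hasPref_append_single.mp hh.2).2)

lemma not_inBlk_fst_bit2 {u : List Bool} {b b' : Bool} (hb : b ≠ b') (t y : C) (v' : List Bool) :
    ¬ inBlk (u ++ [b']) v' (cat (u ++ [b]) t, y) := by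
  intro hh
  rw [cat_append_single] at hh
  exact not_inBlk_fst_bit (by simpa [prepend_zero] using hb) y hh

lemma not_inBlk_snd_bit2 {v : List Bool} {b b' : Bool} (hb : b ≠ b') (t x : C) (u' : List Bool) :
    ¬ inBlk u' (v ++ [b']) (x, cat (v ++ [b]) t) := by
  intro hh
  rw [cat_append_single] at hh
  exact not_inBlk_snd_bit (by simpa [prepend_zero] using hb) x hh

lemma inBlk_cat_ext_fst (u v : List Bool) (b : Bool) (t t' : C) :
    inBlk u v (cat (u ++ [b]) t, cat v t') := by
  rw [cat_append_single]
  exact inBlk_cat u v _ _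

lemma inBlk_cat_ext_snd (u v : List Bool) (b : Bool) (t t' : C) :
    inBlk u v (cat u t, cat (v ++ [b]) t') := by
  rw [cat_append_single]
  exact inBlk_cat u v _ _

lemma disj_bit_fst (u v v' : List Bool) : Disj (u ++ [false]) v (u ++ [true]) v' := by
  intro z h1 h2
  have e1 := (hasPref_append_single.mp h1.1).2
  have e2 := (hasPref_append_single.mp h2.1).2
  rw [e1] at e2
  cases e2

lemma disj_fst_bit {u u' : List Bool} (k : ℕ) (hk : k < u.length) (hk' : k < u'.length)
    (hne : u.getD k false ≠ u'.getD k false) (v v' : List Bool) : Disj u v u' v' :=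
  fun z h1 h2 => hne ((h1.1 k hk).symm.trans (h2.1 k hk'))

-- tr action lemmas
lemma tr_left (u v u' v' : List Bool) (hD : Disj u v u' v') (w w' : C) :
    tr u v u' v' hD (cat u w, cat v w') = (cat u' w, cat v' w') :=
  trFun_left u v u' v' w w'

lemma tr_right (u v u' v' : List Bool) (hD : Disj u v u' v') (w w' : C) :
    tr u v u' v' hD (cat u' w, cat v' w') = (cat u w, cat v w') :=
  trFun_right hD w w'

lemma tr_fix (u v u' v' : List Bool) (hD : Disj u v u' v') {z : C × C}
    (h : ¬ inBlk u v z) (h' : ¬ inBlk u' v' z) : tr u v u' v' hD z = z :=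
  trFun_fix h h'

-- F1' : the self-similar split of a baker's map
lemma bk_split (u v : List Bool) :
    bk u v = tr (u ++ [false]) (v ++ [true]) (u ++ [true]) (v ++ [false])
        (disj_bit_fst u (v ++ [true]) (v ++ [false])) *
      (bk (u ++ [false]) v * bk (u ++ [true]) v) := by
  apply Equiv.ext
  rintro ⟨x, y⟩
  simp only [Equiv.Perm.mul_apply]
  by_cases h : inBlk u v (x, y)
  · have hx : x = cat u (drop u.length x) := (cat_drop h.1).symm
    have hy : y = cat v (drop v.length y) := (cat_drop h.2).symm
    rw [hx, hy]
    generalize drop u.length x = s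
    generalize drop v.length y = s'
    cases hb : s 0
    · have e1 : bk (u ++ [true]) v (cat u s, cat v s') = (cat u s, cat v s') :=
        bk_fix _ _ (not_inBlk_fst_bit (by simp [hb]) _)
      have es : cat u s = cat (u ++ [false]) (shift s) := by
        rw [← hb]; exact cat_split u s
      have e2 : bk (u ++ [false]) v (cat u s, cat v s')
          = (cat (u ++ [false]) (shift (shift s)), cat v (prepend (s 1) s')) := by
        rw [es, bk_cat]; rfl
      rw [e1, e2]
      cases hc : s 1
      · rw [tr_fix _ _ _ _ _ (not_inBlk_snd_bit (by simp [prepend_zero]) _)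
          (not_inBlk_fst_bit2 (by simp) _ _ _)]
        rw [bk_cat, hb]
        rw [show cat u (shift s) = cat (u ++ [false]) (shift (shift s)) from by
          rw [← hc]; exact cat_split u (shift s)]
      · rw [show cat v (prepend true s') = cat (v ++ [true]) s' from
          (cat_append_single v true s').symm]
        rw [tr_left]
        rw [bk_cat, hb]
        rw [cat_append_single v false s']
        rw [show cat (u ++ [true]) (shift (shift s)) = cat u (shift s) from by
          rw [← hc]; exact (cat_split u (shift s)).symm]
    · have es : cat u s = cat (u ++ [true]) (shift s) := by
        rw [← hb]; exact cat_split u s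
      have e1 : bk (u ++ [true]) v (cat u s, cat v s')
          = (cat (u ++ [true]) (shift (shift s)), cat v (prepend (s 1) s')) := by
        rw [es, bk_cat]; rfl
      have e2 : bk (u ++ [false]) v
            (cat (u ++ [true]) (shift (shift s)), cat v (prepend (s 1) s'))
          = (cat (u ++ [true]) (shift (shift s)), cat v (prepend (s 1) s')) :=
        bk_fix _ _ (not_inBlk_fst_bit2 (by simp) _ _ _)
      rw [e1, e2]
      cases hc : s 1
      · rw [show cat v (prepend false s') = cat (v ++ [false]) s' from
          (cat_append_single v false s').symm]
        rw [tr_right]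
        rw [bk_cat, hb]
        rw [cat_append_single v true s']
        rw [show cat (u ++ [false]) (shift (shift s)) = cat u (shift s) from by
          rw [← hc]; exact (cat_split u (shift s)).symm]
      · rw [tr_fix _ _ _ _ _ (not_inBlk_fst_bit2 (by simp) _ _ _)
          (not_inBlk_snd_bit (by simp [prepend_zero]) _)]
        rw [bk_cat, hb]
        rw [show cat (u ++ [true]) (shift (shift s)) = cat u (shift s) from by
          rw [← hc]; exact (cat_split u (shift s)).symm]
  · rw [bk_fix _ _ (fun hh => h (inBlk_fst_ext hh)),
      bk_fix _ _ (fun hh => h (inBlk_fst_ext hh)),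
      tr_fix _ _ _ _ _ (fun hh => h (inBlk_fst_ext (inBlk_snd_ext hh)))
        (fun hh => h (inBlk_fst_ext (inBlk_snd_ext hh))),
      bk_fix _ _ h]

lemma bk_comm (u v p q : List Bool) (hD : Disj u v p q) :
    bk u v * bk p q = bk p q * bk u v := by
  apply Equiv.ext
  rintro ⟨x, y⟩
  simp only [Equiv.Perm.mul_apply]
  by_cases h1 : inBlk u v (x, y)
  · have h2 : ¬ inBlk p q (x, y) := fun hh => hD _ h1 hh
    rw [bk_fix p q h2]
    have hx : x = cat u (drop u.length x) := (cat_drop h1.1).symm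
    have hy : y = cat v (drop v.length y) := (cat_drop h1.2).symm
    rw [hx, hy, bk_cat]
    exact (bk_fix p q (fun hh => hD _ (inBlk_cat u v _ _) hh)).symm
  · by_cases h2 : inBlk p q (x, y)
    · rw [bk_fix u v h1]
      have hx : x = cat p (drop p.length x) := (cat_drop h2.1).symm
      have hy : y = cat q (drop q.length y) := (cat_drop h2.2).symm
      rw [hx, hy, bk_cat]
      exact bk_fix u v (fun hh => hD _ hh (inBlk_cat p q _ _))
    · rw [bk_fix p q h2, bk_fix u v h1, bk_fix p q h2]

def E1l (u v p q : List Bool) (hD : Disj u v p q) : List (Equiv.Perm (C × C)) :=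
  [tr p (q ++ [false]) u (v ++ [false])
     (show Disj _ _ _ _ from fun z h1 h2 => hD z (inBlk_snd_ext h2) (inBlk_snd_ext h1)),
   tr p (q ++ [true]) u (v ++ [true])
     (show Disj _ _ _ _ from fun z h1 h2 => hD z (inBlk_snd_ext h2) (inBlk_snd_ext h1)),
   tr (u ++ [false]) v p (q ++ [false])
     (show Disj _ _ _ _ from fun z h1 h2 => hD z (inBlk_fst_ext h1) (inBlk_snd_ext h2)),
   tr (u ++ [true]) v p (q ++ [true])
     (show Disj _ _ _ _ from fun z h1 h2 => hD z (inBlk_fst_ext h1) (inBlk_snd_ext h2))]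

lemma E1l_prod (u v p q : List Bool) (hD : Disj u v p q) :
    (E1l u v p q hD).prod = bk u v * (bk p q)⁻¹ := by
  simp only [E1l, List.prod_cons, List.prod_nil, mul_one]
  apply Equiv.ext
  rintro ⟨x, y⟩
  simp only [Equiv.Perm.mul_apply]
  by_cases hX : inBlk u v (x, y)
  · have hnD : ¬ inBlk p q (x, y) := fun hh => hD _ hX hh
    rw [bk_inv_fix p q hnD]
    have hx : x = cat u (drop u.length x) := (cat_drop hX.1).symm
    have hy : y = cat v (drop v.length y) := (cat_drop hX.2).symm
    rw [hx, hy]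
    generalize drop u.length x = s
    generalize drop v.length y = s'
    rw [bk_cat]
    cases hi : s 0
    · -- τ1 fixes, τ0 acts, σ1 fixes, σ0 acts
      rw [tr_fix _ _ _ _ _ (not_inBlk_fst_bit (by simp [hi]) _)
        (fun hh => hD _ (inBlk_cat u v s s') (inBlk_snd_ext hh))]
      rw [show cat u s = cat (u ++ [false]) (shift s) from by
        rw [← hi]; exact cat_split u s]
      rw [tr_left]
      rw [tr_fix _ _ _ _ _ (not_inBlk_snd_bit2 (by simp) _ _ _)
        (fun hh => hD _ (inBlk_snd_ext hh) (inBlk_cat_ext_snd p q false _ _))]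
      rw [tr_left]
      rw [cat_append_single v false s']
    · rw [show cat u s = cat (u ++ [true]) (shift s) from by
        rw [← hi]; exact cat_split u s]
      rw [tr_left]
      rw [tr_fix _ _ _ _ _
        (fun hh => hD _ (inBlk_fst_ext hh) (inBlk_cat_ext_snd p q true _ _))
        (not_inBlk_snd_bit2 (by simp) _ _ _)]
      rw [tr_left]
      rw [tr_fix _ _ _ _ _
        (fun hh => hD _ (inBlk_cat_ext_snd u v true _ _) (inBlk_snd_ext hh))
        (not_inBlk_snd_bit2 (by simp) _ _ _)]
      rw [cat_append_single v true s']
  · by_cases hDD : inBlk p q (x, y)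
    · have hx : x = cat p (drop p.length x) := (cat_drop hDD.1).symm
      have hy : y = cat q (drop q.length y) := (cat_drop hDD.2).symm
      rw [hx, hy]
      generalize drop p.length x = t
      generalize drop q.length y = t'
      have eR : bk u v ((bk p q)⁻¹ (cat p t, cat q t'))
          = (cat p (prepend (t' 0) t), cat q (shift t')) := by
        rw [bk_inv_cat]
        exact bk_fix u v (fun hh => hD _ hh (inBlk_cat p q _ _))
      rw [eR]
      cases hj : t' 0
      · -- τ1 fixes, τ0 acts (via tr_right)
        rw [show cat q t' = cat (q ++ [false]) (shift t') from by
          rw [← hj]; exact cat_split q t']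
        rw [tr_fix _ _ _ _ _
          (fun hh => hD _ (inBlk_fst_ext hh) (inBlk_cat_ext_snd p q false _ _))
          (not_inBlk_snd_bit2 (by simp) _ _ _)]
        rw [tr_right]
        cases hk : t' 1
        · -- σ1 fixes, σ0 acts
          rw [show cat (u ++ [false]) t = cat u (prepend false t) from
            cat_append_single u false t]
          rw [show cat v (shift t') = cat (v ++ [false]) (shift (shift t')) from by
            rw [show (false : Bool) = shift t' 0 from by
              show _ = t' 1; rw [hk]]
            exact cat_split v (shift t')]
          rw [tr_fix _ _ _ _ _
            (fun hh => hD _ (inBlk_cat_ext_snd u v false _ _) (inBlk_snd_ext hh))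
            (not_inBlk_snd_bit2 (by simp) _ _ _)]
          rw [tr_right]
          rw [cat_append_single q false]
          rw [show prepend false (shift (shift t')) = shift t' from by
            rw [show (false : Bool) = shift t' 0 from by show _ = t' 1; rw [hk]]
            exact prepend_shift (shift t')]
        · -- σ1 acts, σ0 fixes
          rw [show cat (u ++ [false]) t = cat u (prepend false t) from
            cat_append_single u false t]
          rw [show cat v (shift t') = cat (v ++ [true]) (shift (shift t')) from by
            rw [show (true : Bool) = shift t' 0 from by
              show _ = t' 1; rw [hk]]
            exact cat_split v (shift t')]
          rw [tr_right]
          rw [tr_fix _ _ _ _ _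
            (not_inBlk_snd_bit2 (by simp) _ _ _)
            (fun hh => hD _ (inBlk_snd_ext hh) (inBlk_cat_ext_snd p q true _ _))]
          rw [cat_append_single q true]
          rw [show prepend true (shift (shift t')) = shift t' from by
            rw [show (true : Bool) = shift t' 0 from by show _ = t' 1; rw [hk]]
            exact prepend_shift (shift t')]
      · -- τ1 acts (tr_right), τ0 fixes
        rw [show cat q t' = cat (q ++ [true]) (shift t') from by
          rw [← hj]; exact cat_split q t']
        rw [tr_right]
        rw [tr_fix _ _ _ _ _ (not_inBlk_fst_bit2 (by simp) _ _ _)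
          (fun hh => hD _ (inBlk_cat_ext_fst u v true _ _) (inBlk_snd_ext hh))]
        cases hk : t' 1
        · rw [show cat (u ++ [true]) t = cat u (prepend true t) from
            cat_append_single u true t]
          rw [show cat v (shift t') = cat (v ++ [false]) (shift (shift t')) from by
            rw [show (false : Bool) = shift t' 0 from by
              show _ = t' 1; rw [hk]]
            exact cat_split v (shift t')]
          rw [tr_fix _ _ _ _ _
            (fun hh => hD _ (inBlk_cat_ext_snd u v false _ _) (inBlk_snd_ext hh))
            (not_inBlk_snd_bit2 (by simp) _ _ _)]
          rw [tr_right]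
          rw [cat_append_single q false]
          rw [show prepend false (shift (shift t')) = shift t' from by
            rw [show (false : Bool) = shift t' 0 from by show _ = t' 1; rw [hk]]
            exact prepend_shift (shift t')]
        · rw [show cat (u ++ [true]) t = cat u (prepend true t) from
            cat_append_single u true t]
          rw [show cat v (shift t') = cat (v ++ [true]) (shift (shift t')) from by
            rw [show (true : Bool) = shift t' 0 from by
              show _ = t' 1; rw [hk]]
            exact cat_split v (shift t')]
          rw [tr_right]
          rw [tr_fix _ _ _ _ _
            (not_inBlk_snd_bit2 (by simp) _ _ _)
            (fun hh => hD _ (inBlk_snd_ext hh) (inBlk_cat_ext_snd p q true _ _))]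
          rw [cat_append_single q true]
          rw [show prepend true (shift (shift t')) = shift t' from by
            rw [show (true : Bool) = shift t' 0 from by show _ = t' 1; rw [hk]]
            exact prepend_shift (shift t')]
    · -- fixed by everything
      rw [bk_inv_fix p q hDD, bk_fix u v hX]
      rw [tr_fix _ _ _ _ _ (fun hh => hX (inBlk_fst_ext hh))
        (fun hh => hDD (inBlk_snd_ext hh))]
      rw [tr_fix _ _ _ _ _ (fun hh => hX (inBlk_fst_ext hh))
        (fun hh => hDD (inBlk_snd_ext hh))]
      rw [tr_fix _ _ _ _ _ (fun hh => hDD (inBlk_snd_ext hh))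
        (fun hh => hX (inBlk_snd_ext hh))]
      rw [tr_fix _ _ _ _ _ (fun hh => hDD (inBlk_snd_ext hh))
        (fun hh => hX (inBlk_snd_ext hh))]

lemma E1l_mem (u v p q : List Bool) (hD : Disj u v p q) :
    ∀ τ ∈ E1l u v p q hD, IsCylTransposition τ := by
  intro τ hτ
  simp only [E1l, List.mem_cons, List.not_mem_nil, or_false] at hτ
  rcases hτ with rfl | rfl | rfl | rfl <;> exact tr_isCylTransposition _ _ _ _ _

lemma bk_child0 (u v p q : List Bool) (hD : Disj u v p q) (hD1 : Disj p q (u ++ [true]) v) :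
    bk (u ++ [false]) v =
      tr (u ++ [false]) (v ++ [true]) (u ++ [true]) (v ++ [false])
        (disj_bit_fst u (v ++ [true]) (v ++ [false])) *
      ((E1l u v p q hD).prod * (E1l p q (u ++ [true]) v hD1).prod) := by
  have ht : tr (u ++ [false]) (v ++ [true]) (u ++ [true]) (v ++ [false])
        (disj_bit_fst u (v ++ [true]) (v ++ [false])) *
      tr (u ++ [false]) (v ++ [true]) (u ++ [true]) (v ++ [false])
        (disj_bit_fst u (v ++ [true]) (v ++ [false])) = 1 :=
    Equiv.ext fun z => trFun_invol (disj_bit_fst u (v ++ [true]) (v ++ [false])) z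
  rw [E1l_prod, E1l_prod, bk_split u v]
  simp only [mul_assoc]
  rw [inv_mul_cancel_left, ← mul_assoc, ht, one_mul]
  group

lemma bk_child1 (u v p q : List Bool) (hD0 : Disj u v p q) (hD1 : Disj p q (u ++ [false]) v) :
    bk (u ++ [true]) v =
      tr (u ++ [false]) (v ++ [true]) (u ++ [true]) (v ++ [false])
        (disj_bit_fst u (v ++ [true]) (v ++ [false])) *
      ((E1l u v p q hD0).prod * (E1l p q (u ++ [false]) v hD1).prod) := by
  have ht : tr (u ++ [false]) (v ++ [true]) (u ++ [true]) (v ++ [false])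
        (disj_bit_fst u (v ++ [true]) (v ++ [false])) *
      tr (u ++ [false]) (v ++ [true]) (u ++ [true]) (v ++ [false])
        (disj_bit_fst u (v ++ [true]) (v ++ [false])) = 1 :=
    Equiv.ext fun z => trFun_invol (disj_bit_fst u (v ++ [true]) (v ++ [false])) z
  have hsplit : bk u v =
      tr (u ++ [false]) (v ++ [true]) (u ++ [true]) (v ++ [false])
        (disj_bit_fst u (v ++ [true]) (v ++ [false])) *
      (bk (u ++ [true]) v * bk (u ++ [false]) v) := by
    rw [bk_split u v, bk_comm (u ++ [false]) v (u ++ [true]) v (disj_bit_fst u v v)]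
  rw [E1l_prod, E1l_prod, hsplit]
  simp only [mul_assoc]
  rw [inv_mul_cancel_left, ← mul_assoc, ht, one_mul]
  group

/-- Brin's main lemma: the primary baker's map on `C × C` is a product of finitely many
transpositions of disjoint cylinder sets. -/
theorem stmt_11 (β : Equiv.Perm (C × C))
    (hβ : ∀ x y : C, β (x, y) = (shift x, prepend (x 0) y)) :
    ∃ L : List (Equiv.Perm (C × C)),
      (∀ τ ∈ L, IsCylTransposition τ) ∧ β = L.prod := by
  have hg0 : Disj [false] [true] [true] [false] := disj_bit_fst [] [true] [false]
  have hgA : Disj [false, false] [true] [false, true] [false] :=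
    disj_bit_fst [false] [true] [false]
  have hgB : Disj [true, false] [true] [true, true] [false] :=
    disj_bit_fst [true] [true] [false]
  have hAB : Disj [false] [] [true] [] := disj_bit_fst [] [] []
  have hBA : Disj [true] [] [false] [] := hAB.symm
  have hBA1 : Disj [true] [] [false, true] [] :=
    disj_fst_bit 0 (by decide) (by decide) (by decide) _ _
  have hBA0 : Disj [true] [] [false, false] [] :=
    disj_fst_bit 0 (by decide) (by decide) (by decide) _ _
  have hAB1 : Disj [false] [] [true, true] [] :=
    disj_fst_bit 0 (by decide) (by decide) (by decide) _ _
  have hAB0 : Disj [false] [] [true, false] [] :=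
    disj_fst_bit 0 (by decide) (by decide) (by decide) _ _
  have e0 : β = bk [] [] := by
    apply Equiv.ext
    rintro ⟨x, y⟩
    rw [hβ x y]
    have hin : inBlk [] [] (x, y) :=
      ⟨fun i hi => absurd hi (by simp), fun i hi => absurd hi (by simp)⟩
    show _ = bkFun [] [] (x, y)
    simp only [bkFun, if_pos hin]
    rw [cat_nil, cat_nil]
    rfl
  have e1 : bk [] [] = tr [false] [true] [true] [false] hg0 *
      (bk [false] [] * bk [true] []) := bk_split [] []
  have eA : bk [false] [] = tr [false, false] [true] [false, true] [false] hgA *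
      (bk [false, false] [] * bk [false, true] []) := bk_split [false] []
  have eB : bk [true] [] = tr [true, false] [true] [true, true] [false] hgB *
      (bk [true, false] [] * bk [true, true] []) := bk_split [true] []
  have eA0 : bk [false, false] [] = tr [false, false] [true] [false, true] [false] hgA *
      ((E1l [false] [] [true] [] hAB).prod * (E1l [true] [] [false, true] [] hBA1).prod) :=
    bk_child0 [false] [] [true] [] hAB hBA1
  have eA1 : bk [false, true] [] = tr [false, false] [true] [false, true] [false] hgA *
      ((E1l [false] [] [true] [] hAB).prod * (E1l [true] [] [false, false] [] hBA0).prod) :=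
    bk_child1 [false] [] [true] [] hAB hBA0
  have eB0 : bk [true, false] [] = tr [true, false] [true] [true, true] [false] hgB *
      ((E1l [true] [] [false] [] hBA).prod * (E1l [false] [] [true, true] [] hAB1).prod) :=
    bk_child0 [true] [] [false] [] hBA hAB1
  have eB1 : bk [true, true] [] = tr [true, false] [true] [true, true] [false] hgB *
      ((E1l [true] [] [false] [] hBA).prod * (E1l [false] [] [true, false] [] hAB0).prod) :=
    bk_child1 [true] [] [false] [] hBA hAB0
  refine ⟨[tr [false] [true] [true] [false] hg0,
      tr [false, false] [true] [false, true] [false] hgA,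
      tr [false, false] [true] [false, true] [false] hgA] ++
      E1l [false] [] [true] [] hAB ++ E1l [true] [] [false, true] [] hBA1 ++
      [tr [false, false] [true] [false, true] [false] hgA] ++
      E1l [false] [] [true] [] hAB ++ E1l [true] [] [false, false] [] hBA0 ++
      [tr [true, false] [true] [true, true] [false] hgB,
       tr [true, false] [true] [true, true] [false] hgB] ++
      E1l [true] [] [false] [] hBA ++ E1l [false] [] [true, true] [] hAB1 ++
      [tr [true, false] [true] [true, true] [false] hgB] ++
      E1l [true] [] [false] [] hBA ++ E1l [false] [] [true, false] [] hAB0, ?_, ?_⟩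
  · simp only [List.forall_mem_append, List.forall_mem_cons, List.forall_mem_nil,
      and_true, true_and]
    repeat' apply And.intro
    all_goals
      first
        | exact tr_isCylTransposition _ _ _ _ _
        | exact E1l_mem _ _ _ _ _
        | exact fun τ h => E1l_mem _ _ _ _ _ τ h
        | exact fun τ h => absurd h List.not_mem_nil
  · rw [e0, e1, eA, eB, eA0, eA1, eB0, eB1]
    simp only [List.prod_append, List.prod_cons, List.prod_nil, mul_one, mul_assoc]
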